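/- Let {Λ_i}_{i∈I} be a g-frame for a finite-dimensional Hilbert space H with g-frame operator S, and let {Γ_i}_{i∈I} be any Parseval g-frame. Then ∑_i ‖Λ_i − Γ_i‖_F² = ∑_i ‖Λ_i − Λ_i S^{-1/2}‖_F² + ∑_i ‖Γ_i S^{1/4} − Λ_i S^{-1/4}‖_F². -/

import Mathlib

open scoped InnerProductSpace ComplexConjugate NNReal

section helpers
variable {H K : Type*} [NormedAddCommGroup H] [InnerProductSpace ℂ H] [FiniteDimensional ℂ H]
  [NormedAddCommGroup K] [InnerProductSpace ℂ K] [CompleteSpace K]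
  {I : Type*} {Λ : I → (H →L[ℂ] K)} {S : H →L[ℂ] H}

private lemma hSr' (hS : ∀ x : H, HasSum (fun i => (Λ i).adjoint (Λ i x)) (S x)) (x y : H) :
    HasSum (fun i => ⟪Λ i y, Λ i x⟫_ℂ) ⟪y, S x⟫_ℂ := by
  have := (innerSL ℂ y).hasSum (hS x)
  simpa [ContinuousLinearMap.adjoint_inner_right] using this

private lemma hSsa' (hS : ∀ x : H, HasSum (fun i : I => (Λ i).adjoint (Λ i x)) (S x)) :
    IsSelfAdjoint S := by
  rw [ContinuousLinearMap.isSelfAdjoint_iff_isSymmetric]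
  intro x y
  have h1 := (hSr' hS x y).tsum_eq
  have h2 := (hSr' hS y x).tsum_eq
  calc ⟪S x, y⟫_ℂ = conj ⟪y, S x⟫_ℂ := (inner_conj_symm _ _).symm
    _ = conj (∑' i, ⟪Λ i y, Λ i x⟫_ℂ) := by rw [h1]
    _ = ∑' i, conj ⟪Λ i y, Λ i x⟫_ℂ := by
        rw [starRingEnd_apply, tsum_star]; rfl
    _ = ∑' i, ⟪Λ i x, Λ i y⟫_ℂ := by simp
    _ = ⟪x, S y⟫_ℂ := h2

private lemma hSn' (hS : ∀ x : H, HasSum (fun i : I => (Λ i).adjoint (Λ i x)) (S x)) (x : H) :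
    HasSum (fun i => ‖Λ i x‖ ^ 2) (⟪x, S x⟫_ℂ).re := by
  have := Complex.reCLM.hasSum (hSr' hS x x)
  have he : ∀ v : K, (⟪v, v⟫_ℂ).re = ‖v‖ ^ 2 := fun v => @inner_self_eq_norm_sq ℂ _ _ _ _ v
  have h2 : (fun i => ‖Λ i x‖ ^ 2) = fun i => Complex.reCLM ⟪Λ i x, Λ i x⟫_ℂ :=
    funext fun i => (he (Λ i x)).symm
  rw [h2]; exact this

private lemma hspec' {A : ℝ} (hA : 0 < A)
    (hS : ∀ x : H, HasSum (fun i : I => (Λ i).adjoint (Λ i x)) (S x))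
    (hlow : ∀ x : H, A * ‖x‖ ^ 2 ≤ ∑' i, ‖Λ i x‖ ^ 2) :
    ∀ μ ∈ spectrum ℝ S, A ≤ μ := by
  intro μ hμ
  by_contra hcon
  push_neg at hcon
  apply spectrum.notMem_iff.mpr _ hμ
  have hc : (0:ℝ) < A - μ := by linarith
  have key : ∀ x : H, ‖x‖ ^ 2 * (⟨A - μ, hc.le⟩ : ℝ≥0) ≤ ‖⟪(S - μ • 1) x, x⟫_ℂ‖ := by
    intro x
    have h1 : A * ‖x‖ ^ 2 ≤ (⟪x, S x⟫_ℂ).re := by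
      simpa [(hSn' hS x).tsum_eq] using hlow x
    have hx := @inner_self_eq_norm_sq ℂ _ _ _ _ x
    simp only [RCLike.re_to_complex] at hx
    have h2 : (⟪(S - μ • 1) x, x⟫_ℂ).re = (⟪x, S x⟫_ℂ).re - μ * ‖x‖ ^ 2 := by
      have ha : (⟪μ • x, x⟫_ℂ).re = μ * ‖x‖ ^ 2 := by
        rw [RCLike.real_smul_eq_coe_smul (K := ℂ), inner_smul_left]
        have him : (⟪x, x⟫_ℂ).im = 0 := @inner_self_im ℂ _ _ _ _ x
        simp [Complex.mul_re, hx, him, ← Complex.ofReal_pow, Complex.ofReal_re]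
      have hb : (⟪S x, x⟫_ℂ).re = (⟪x, S x⟫_ℂ).re := by
        simpa [RCLike.re_to_complex] using inner_re_symm (𝕜 := ℂ) (S x) x
      simp only [ContinuousLinearMap.sub_apply, ContinuousLinearMap.smul_apply,
        ContinuousLinearMap.one_apply, inner_sub_left, Complex.sub_re, ha, hb]
    have h3 : (⟪(S - μ • 1) x, x⟫_ℂ).re ≤ ‖⟪(S - μ • 1) x, x⟫_ℂ‖ := Complex.re_le_norm _
    have : ‖x‖ ^ 2 * (A - μ) ≤ (⟪(S - μ • 1) x, x⟫_ℂ).re := by rw [h2]; nlinarith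
    exact le_trans (by exact_mod_cast this) h3
  have hu := ContinuousLinearMap.isUnit_of_forall_le_norm_inner_map (S - μ • 1) hc key
  have : algebraMap ℝ (H →L[ℂ] H) μ - S = -(S - μ • 1) := by
    rw [Algebra.algebraMap_eq_smul_one]; abel
  rw [this]
  exact hu.neg

variable (S) in
private lemma hcont' {A : ℝ} (hA : 0 < A) (hpos : ∀ μ ∈ spectrum ℝ S, A ≤ μ) (r : ℝ) :
    ContinuousOn (fun t : ℝ => t ^ r) (spectrum ℝ S) := fun t ht =>
  (Real.continuousAt_rpow_const t r
    (Or.inl (ne_of_gt (lt_of_lt_of_le hA (hpos t ht))))).continuousWithinAt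

private lemma cfc_rpow_mul' {A : ℝ} (hA : 0 < A) (hpos : ∀ μ ∈ spectrum ℝ S, A ≤ μ) (a b : ℝ) :
    cfc (fun t : ℝ => t ^ a) S * cfc (fun t : ℝ => t ^ b) S
      = cfc (fun t : ℝ => t ^ (a + b)) S := by
  rw [← cfc_mul _ _ S (hcont' S hA hpos a) (hcont' S hA hpos b)]
  exact cfc_congr fun t ht => (Real.rpow_add (lt_of_lt_of_le hA (hpos t ht)) a b).symm

private lemma cfc_rpow_one' (hsa : IsSelfAdjoint S) : cfc (fun t : ℝ => t ^ (1:ℝ)) S = S := by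
  rw [show (fun t : ℝ => t ^ (1:ℝ)) = id from funext fun t => Real.rpow_one t]
  exact cfc_id ℝ S hsa

private lemma cfc_rpow_zero' (hsa : IsSelfAdjoint S) : cfc (fun t : ℝ => t ^ (0:ℝ)) S = 1 := by
  rw [show (fun t : ℝ => t ^ (0:ℝ)) = fun _ => (1:ℝ) from funext fun t => Real.rpow_zero t]
  exact cfc_const_one ℝ S hsa

private lemma trace_eq_sum_inner' (T : H →L[ℂ] H) :
    LinearMap.trace ℂ H T.toLinearMap
      = ∑ k, ⟪stdOrthonormalBasis ℂ H k, T (stdOrthonormalBasis ℂ H k)⟫_ℂ := by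
  rw [LinearMap.trace_eq_matrix_trace ℂ (stdOrthonormalBasis ℂ H).toBasis, Matrix.trace]
  simp [Matrix.diag, LinearMap.toMatrix_apply, OrthonormalBasis.coe_toBasis,
    OrthonormalBasis.coe_toBasis_repr_apply, OrthonormalBasis.repr_apply_apply]

private lemma trace_cyc' (M P Q : H →L[ℂ] H) (h : Q * P = 1) :
    (∑ k, ⟪stdOrthonormalBasis ℂ H k, (P * M * Q) (stdOrthonormalBasis ℂ H k)⟫_ℂ)
      = ∑ k, ⟪stdOrthonormalBasis ℂ H k, M (stdOrthonormalBasis ℂ H k)⟫_ℂ := by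
  rw [← trace_eq_sum_inner', ← trace_eq_sum_inner']
  have e1 : (P * M * Q).toLinearMap = P.toLinearMap * M.toLinearMap * Q.toLinearMap := rfl
  have h' : Q.toLinearMap * P.toLinearMap = 1 := by
    have : (Q * P).toLinearMap = (1 : H →L[ℂ] H).toLinearMap := by rw [h]
    exact this
  rw [e1, LinearMap.trace_mul_comm, ← mul_assoc, h', one_mul]

private lemma ip_conj' (T U : H →L[ℂ] K) (P Q : H →L[ℂ] H) (hP : IsSelfAdjoint P)
    (h : Q * P = 1) :
    ∑ k, ⟪T (P (stdOrthonormalBasis ℂ H k)), U (Q (stdOrthonormalBasis ℂ H k))⟫_ℂ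
      = ∑ k, ⟪T (stdOrthonormalBasis ℂ H k), U (stdOrthonormalBasis ℂ H k)⟫_ℂ := by
  have key : ∀ x : H, ⟪T (P x), U (Q x)⟫_ℂ = ⟪x, (P * (T.adjoint ∘L U) * Q) x⟫_ℂ := by
    intro x
    calc ⟪T (P x), U (Q x)⟫_ℂ
        = ⟪P x, T.adjoint (U (Q x))⟫_ℂ := (ContinuousLinearMap.adjoint_inner_right T _ _).symm
      _ = ⟪P.adjoint x, T.adjoint (U (Q x))⟫_ℂ := by rw [hP.adjoint_eq]
      _ = ⟪x, P (T.adjoint (U (Q x)))⟫_ℂ := ContinuousLinearMap.adjoint_inner_left P _ _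
      _ = ⟪x, (P * (T.adjoint ∘L U) * Q) x⟫_ℂ := rfl
  have key2 : ∀ x : H, ⟪T x, U x⟫_ℂ = ⟪x, (T.adjoint ∘L U) x⟫_ℂ := by
    intro x
    rw [← ContinuousLinearMap.adjoint_inner_right T]
    rfl
  simp_rw [key, key2]
  exact trace_cyc' (T.adjoint ∘L U) P Q h

private lemma inner_conj_op' (R' V : H →L[ℂ] H) (hR : IsSelfAdjoint R') (x : H) :
    ⟪R' x, V (R' x)⟫_ℂ = ⟪x, (R' * (V * R')) x⟫_ℂ := by
  calc ⟪R' x, V (R' x)⟫_ℂ = ⟪R'.adjoint x, V (R' x)⟫_ℂ := by rw [hR.adjoint_eq]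
    _ = ⟪x, R' (V (R' x))⟫_ℂ := ContinuousLinearMap.adjoint_inner_left R' _ _
    _ = ⟪x, (R' * (V * R')) x⟫_ℂ := rfl

end helpers

/-- The Hilbert–Schmidt norm squared `‖T‖_F²` of an operator on a finite-dimensional
Hilbert space. -/
noncomputable def hsNormSq {H K : Type*} [NormedAddCommGroup H] [InnerProductSpace ℂ H]
    [FiniteDimensional ℂ H] [NormedAddCommGroup K] [InnerProductSpace ℂ K]
    (T : H →L[ℂ] K) : ℝ :=
  ∑ k, ‖T (stdOrthonormalBasis ℂ H k)‖ ^ 2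

/-- For a g-frame `{Λ i}` with frame operator `S` and any Parseval g-frame `{Γ i}`:
`∑ i ‖Λ i − Γ i‖_F² = ∑ i ‖Λ i − Λ i S^{-1/2}‖_F² + ∑ i ‖Γ i S^{1/4} − Λ i S^{-1/4}‖_F²`. -/
theorem gframe_parseval_approx_identity
    {H K : Type*} [NormedAddCommGroup H] [InnerProductSpace ℂ H] [FiniteDimensional ℂ H]
    [NormedAddCommGroup K] [InnerProductSpace ℂ K] [CompleteSpace K]
    {I : Type*} (Λ : I → (H →L[ℂ] K)) (S : H →L[ℂ] H)
    (A B : ℝ) (hA : 0 < A) (hB : 0 < B)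
    (hsum : ∀ x : H, Summable fun i => ‖Λ i x‖ ^ 2)
    (hlow : ∀ x : H, A * ‖x‖ ^ 2 ≤ ∑' i, ‖Λ i x‖ ^ 2)
    (hup : ∀ x : H, ∑' i, ‖Λ i x‖ ^ 2 ≤ B * ‖x‖ ^ 2)
    (hS : ∀ x : H, HasSum (fun i => (Λ i).adjoint (Λ i x)) (S x))
    (Γ : I → (H →L[ℂ] K))
    (hΓ : ∀ x : H, HasSum (fun i => ‖Γ i x‖ ^ 2) (‖x‖ ^ 2)) :
    ∑' i, hsNormSq (Λ i - Γ i)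
      = (∑' i, hsNormSq (Λ i - (Λ i) ∘L cfc (fun t : ℝ => t ^ (-(1/2 : ℝ))) S))
        + ∑' i, hsNormSq ((Γ i) ∘L cfc (fun t : ℝ => t ^ ((1/4 : ℝ))) S
            - (Λ i) ∘L cfc (fun t : ℝ => t ^ (-(1/4 : ℝ))) S) := by
  classical
  set e := stdOrthonormalBasis ℂ H with he
  have hsa : IsSelfAdjoint S := hSsa' hS
  have hpos : ∀ μ ∈ spectrum ℝ S, A ≤ μ := hspec' hA hS hlow
  set P := cfc (fun t : ℝ => t ^ ((1/4 : ℝ))) S with hPdef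
  set Q := cfc (fun t : ℝ => t ^ (-(1/4 : ℝ))) S with hQdef
  set R := cfc (fun t : ℝ => t ^ (-(1/2 : ℝ))) S with hRdef
  set W := cfc (fun t : ℝ => t ^ ((1/2 : ℝ))) S with hWdef
  have hPsa : IsSelfAdjoint P := cfc_predicate _ S
  have hQsa : IsSelfAdjoint Q := cfc_predicate _ S
  have hRsa : IsSelfAdjoint R := cfc_predicate _ S
  have hQP : Q * P = 1 := by
    rw [hQdef, hPdef, cfc_rpow_mul' hA hpos,
      show (-(1/4 : ℝ) + 1/4) = 0 by norm_num, cfc_rpow_zero' hsa]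
  have hSR : S * R = W := by
    conv_lhs => rw [← cfc_rpow_one' (S := S) hsa]
    rw [hRdef, cfc_rpow_mul' hA hpos, show ((1:ℝ) + -(1/2)) = 1/2 by norm_num, hWdef]
  have hRW : R * W = 1 := by
    rw [hRdef, hWdef, cfc_rpow_mul' hA hpos,
      show (-(1/2 : ℝ) + 1/2) = 0 by norm_num, cfc_rpow_zero' hsa]
  have hSQ : S * Q = cfc (fun t : ℝ => t ^ ((3/4 : ℝ))) S := by
    conv_lhs => rw [← cfc_rpow_one' (S := S) hsa]
    rw [hQdef, cfc_rpow_mul' hA hpos, show ((1:ℝ) + -(1/4)) = 3/4 by norm_num]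
  have hQSQ : Q * (S * Q) = W := by
    rw [hSQ, hQdef, cfc_rpow_mul' hA hpos,
      show (-(1/4 : ℝ) + 3/4) = 1/2 by norm_num, hWdef]
  have hPP : P * (1 * P) = W := by
    rw [one_mul, hPdef, cfc_rpow_mul' hA hpos,
      show ((1/4 : ℝ) + 1/4) = 1/2 by norm_num, hWdef]
  have hRSR : R * (S * R) = 1 := by rw [hSR, hRW]
  -- basic facts
  have hns : ∀ T : H →L[ℂ] K, hsNormSq T = ∑ k, ‖T (e k)‖ ^ 2 := fun T => rfl
  have hek : ∀ k, ‖e k‖ = 1 := fun k => (e.orthonormal).1 k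
  have normsub : ∀ u v : K, ‖u - v‖ ^ 2 = ‖u‖ ^ 2 - 2 * (⟪u, v⟫_ℂ).re + ‖v‖ ^ 2 := by
    intro u v
    simpa [RCLike.re_to_complex] using @norm_sub_sq ℂ _ _ _ _ u v
  set N : ℝ := (Module.finrank ℂ H : ℝ) with hN
  set thalf : ℝ := ∑ k, (⟪e k, W (e k)⟫_ℂ).re with hthalf
  -- families
  set a : I → ℝ := fun i => hsNormSq (Λ i) with ha
  set g : I → ℝ := fun i => hsNormSq (Γ i) with hg
  set c : I → ℝ := fun i => ∑ k, (⟪Λ i (e k), Γ i (e k)⟫_ℂ).re with hc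
  set d : I → ℝ := fun i => ∑ k, (⟪Λ i (e k), Λ i (R (e k))⟫_ℂ).re with hd
  -- HasSum facts
  have HA : Summable a := by
    refine summable_sum fun k _ => ?_
    exact hsum (e k)
  have Hg : HasSum g N := by
    have h := hasSum_sum (s := (Finset.univ : Finset (Fin (Module.finrank ℂ H))))
      (f := fun k i => ‖Γ i (e k)‖ ^ 2) (a := fun k => ‖e k‖ ^ 2) (fun k _ => hΓ (e k))
    have : (∑ k, ‖e k‖ ^ 2) = N := by simp [hek, hN]
    rw [this] at h
    exact h
  have hone : ∀ x : H, (1 : H →L[ℂ] H) x = x := fun x => rfl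
  have Hr : HasSum (fun i => hsNormSq (Λ i ∘L R)) N := by
    have h := hasSum_sum (s := (Finset.univ : Finset (Fin (Module.finrank ℂ H))))
      (f := fun k i => ‖Λ i (R (e k))‖ ^ 2)
      (a := fun k => (⟪R (e k), S (R (e k))⟫_ℂ).re) (fun k _ => hSn' hS (R (e k)))
    have hval : (∑ k, (⟪R (e k), S (R (e k))⟫_ℂ).re) = N := by
      have hv : ∀ k : Fin (Module.finrank ℂ H), (⟪R (e k), S (R (e k))⟫_ℂ).re = 1 := by
        intro k
        rw [inner_conj_op' R S hRsa, hRSR, ContinuousLinearMap.one_apply]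
        have := @inner_self_eq_norm_sq ℂ _ _ _ _ (e k)
        simp only [RCLike.re_to_complex] at this
        rw [this, hek k]; norm_num
      simp [hv, hN]
    rw [hval] at h
    exact h
  have Hq : HasSum (fun i => hsNormSq (Λ i ∘L Q)) thalf := by
    have h := hasSum_sum (s := (Finset.univ : Finset (Fin (Module.finrank ℂ H))))
      (f := fun k i => ‖Λ i (Q (e k))‖ ^ 2)
      (a := fun k => (⟪Q (e k), S (Q (e k))⟫_ℂ).re) (fun k _ => hSn' hS (Q (e k)))
    have hval : (∑ k, (⟪Q (e k), S (Q (e k))⟫_ℂ).re) = thalf := by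
      refine Finset.sum_congr rfl fun k _ => ?_
      rw [inner_conj_op' Q S hQsa, hQSQ]
    rw [hval] at h
    exact h
  have Hp : HasSum (fun i => hsNormSq (Γ i ∘L P)) thalf := by
    have h := hasSum_sum (s := (Finset.univ : Finset (Fin (Module.finrank ℂ H))))
      (f := fun k i => ‖Γ i (P (e k))‖ ^ 2)
      (a := fun k => ‖P (e k)‖ ^ 2) (fun k _ => hΓ (P (e k)))
    have hval : (∑ k, ‖P (e k)‖ ^ 2) = thalf := by
      refine Finset.sum_congr rfl fun k _ => ?_
      have h1 := @inner_self_eq_norm_sq ℂ _ _ _ _ (P (e k))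
      simp only [RCLike.re_to_complex] at h1
      have h2 := inner_conj_op' P 1 hPsa (e k)
      rw [ContinuousLinearMap.one_apply] at h2
      rw [← h1, h2, hPP]
    rw [hval] at h
    exact h
  have Hd : HasSum d thalf := by
    have h := hasSum_sum (s := (Finset.univ : Finset (Fin (Module.finrank ℂ H))))
      (f := fun k i => (⟪Λ i (e k), Λ i (R (e k))⟫_ℂ).re)
      (a := fun k => (⟪e k, S (R (e k))⟫_ℂ).re)
      (fun k _ => Complex.reCLM.hasSum (hSr' hS (R (e k)) (e k)))
    have hval : (∑ k, (⟪e k, S (R (e k))⟫_ℂ).re) = thalf := by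
      refine Finset.sum_congr rfl fun k _ => ?_
      rw [show (⟪e k, S (R (e k))⟫_ℂ) = ⟪e k, (S * R) (e k)⟫_ℂ from rfl, hSR]
    rw [hval] at h
    exact h
  have HC : Summable c := by
    refine Summable.of_norm_bounded
      (((HA.hasSum.add Hg.summable.hasSum).summable).div_const 2) ?_
    intro i
    rw [Real.norm_eq_abs, hc]
    calc |∑ k, (⟪Λ i (e k), Γ i (e k)⟫_ℂ).re|
        ≤ ∑ k, |(⟪Λ i (e k), Γ i (e k)⟫_ℂ).re| := Finset.abs_sum_le_sum_abs _ _
      _ ≤ ∑ k, (‖Λ i (e k)‖ ^ 2 + ‖Γ i (e k)‖ ^ 2) / 2 := by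
          refine Finset.sum_le_sum fun k _ => ?_
          have h1 : |(⟪Λ i (e k), Γ i (e k)⟫_ℂ).re| ≤ ‖⟪Λ i (e k), Γ i (e k)⟫_ℂ‖ :=
            Complex.abs_re_le_norm _
          have h2 : ‖⟪Λ i (e k), Γ i (e k)⟫_ℂ‖ ≤ ‖Λ i (e k)‖ * ‖Γ i (e k)‖ :=
            norm_inner_le_norm _ _
          nlinarith [sq_nonneg (‖Λ i (e k)‖ - ‖Γ i (e k)‖)]
      _ = (a i + g i) / 2 := by
          simp only [ha, hg, hns]
          rw [← Finset.sum_div, Finset.sum_add_distrib]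
  -- cross-term equality
  have Ecross : ∀ i, (∑ k, (⟪Γ i (P (e k)), Λ i (Q (e k))⟫_ℂ).re) = c i := by
    intro i
    have h1 := congrArg Complex.re (ip_conj' (Γ i) (Λ i) P Q hPsa hQP)
    rw [Complex.re_sum, Complex.re_sum] at h1
    rw [h1, hc]
    refine Finset.sum_congr rfl fun k _ => ?_
    simpa [RCLike.re_to_complex] using inner_re_symm (𝕜 := ℂ) (Γ i (e k)) (Λ i (e k))
  -- pointwise expansions
  have L1 : ∀ i, hsNormSq (Λ i - Γ i) = a i - 2 * c i + g i := by
    intro i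
    simp only [ha, hg, hc, hns, Finset.mul_sum, ← Finset.sum_sub_distrib,
      ← Finset.sum_add_distrib]
    refine Finset.sum_congr rfl fun k _ => ?_
    rw [ContinuousLinearMap.sub_apply, normsub]
  have L2 : ∀ i, hsNormSq (Λ i - Λ i ∘L R) = a i - 2 * d i + hsNormSq (Λ i ∘L R) := by
    intro i
    simp only [ha, hd, hns, Finset.mul_sum, ← Finset.sum_sub_distrib,
      ← Finset.sum_add_distrib]
    refine Finset.sum_congr rfl fun k _ => ?_
    rw [ContinuousLinearMap.sub_apply, normsub]
    rfl
  have L3 : ∀ i, hsNormSq (Γ i ∘L P - Λ i ∘L Q)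
      = hsNormSq (Γ i ∘L P) - 2 * c i + hsNormSq (Λ i ∘L Q) := by
    intro i
    rw [← Ecross i]
    simp only [hns, Finset.mul_sum, ← Finset.sum_sub_distrib, ← Finset.sum_add_distrib]
    refine Finset.sum_congr rfl fun k _ => ?_
    rw [ContinuousLinearMap.sub_apply, normsub]
    rfl
  -- assembly
  set aT : ℝ := ∑' i, a i with haT
  set cT : ℝ := ∑' i, c i with hcT
  have HL : HasSum (fun i => hsNormSq (Λ i - Γ i)) (aT - 2 * cT + N) := by
    have := (HA.hasSum.sub (HC.hasSum.mul_left 2)).add Hg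
    simpa [L1] using this
  have HR1 : HasSum (fun i => hsNormSq (Λ i - Λ i ∘L R)) (aT - 2 * thalf + N) := by
    have := (HA.hasSum.sub (Hd.mul_left 2)).add Hr
    simpa [L2] using this
  have HR2 : HasSum (fun i => hsNormSq (Γ i ∘L P - Λ i ∘L Q)) (thalf - 2 * cT + thalf) := by
    have := (Hp.sub (HC.hasSum.mul_left 2)).add Hq
    simpa [L3] using this
  rw [HL.tsum_eq, HR1.tsum_eq, HR2.tsum_eq]
  ring
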